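/- Let π be a permutation gate in 𝒞₃ that is in staircase form. Define an operation on 𝔽₂ⁿ by setting eᵢeⱼ := π(eᵢ+eⱼ) + eᵢ + eⱼ for all i,j ∈ [n] (so in particular eᵢeᵢ = 0 since π(0)=0) and extending bilinearly. Then this operation is a descending multiplication on 𝔽₂ⁿ. -/

import Mathlib

/-! Common framework: qubit gates, the Pauli group, the Clifford hierarchy,
permutation gates, Toffoli gates and staircase form, descending multiplications,
multilinear polynomial representations. -/

/-- Vectors in `𝔽₂ⁿ`, indexing computational basis states. -/
abbrev QV (n : ℕ) := Fin n → ZMod 2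

/-- `n`-qubit gates: `2ⁿ × 2ⁿ` complex matrices indexed by `𝔽₂ⁿ`. -/
abbrev QMat (n : ℕ) := Matrix (QV n) (QV n) ℂ

/-- Standard basis vector `eᵢ` of `𝔽₂ⁿ`. -/
def stdBasis (n : ℕ) (i : Fin n) : QV n := fun m => if m = i then 1 else 0

/-- The gate `X^u Z^z`, sending `|b⟩` to `(-1)^(z·b) |b+u⟩`. -/
noncomputable def XZGate (n : ℕ) (u z : QV n) : QMat n :=
  fun a b => if a = b + u then (-1 : ℂ) ^ (∑ i, (z i).val * (b i).val) else 0

/-- The Pauli group on `n` qubits: gates `c·P₁⊗⋯⊗Pₙ`, `c ∈ {±1, ±i}`,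
`Pᵢ ∈ {I,X,Y,Z}`, equivalently phases times `X^u Z^z`. -/
def PauliGroup (n : ℕ) : Set (QMat n) :=
  { P | ∃ (c : ℂ) (u z : QV n),
      (c = 1 ∨ c = -1 ∨ c = Complex.I ∨ c = -Complex.I) ∧ P = c • XZGate n u z }

/-- Level `k` of the Clifford hierarchy `𝒞ₖ` (level 1 is the Pauli group,
level 2 the Clifford group; level 0 is junk/empty). -/
def CliffordLevel (n : ℕ) : ℕ → Set (QMat n)
  | 0 => ∅
  | 1 => PauliGroup n
  | (k+2) => { U | U ∈ Matrix.unitaryGroup (QV n) ℂ ∧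
      ∀ P ∈ PauliGroup n, U * P * star U ∈ CliffordLevel n (k+1) }

/-- The permutation gate of a permutation `f` of `𝔽₂ⁿ`: sends `|v⟩` to `|f v⟩`. -/
noncomputable def permGate (n : ℕ) (f : QV n ≃ QV n) : QMat n :=
  fun a b => if a = f b then 1 else 0

/-- A diagonal gate. -/
def IsDiagonal (n : ℕ) (d : QMat n) : Prop := ∀ a b : QV n, a ≠ b → d a b = 0

/-- A gate is semi-Clifford if it equals `φ₁ d φ₂` for Clifford `φ₁, φ₂` and diagonal `d`. -/
def IsSemiClifford (n : ℕ) (U : QMat n) : Prop :=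
  ∃ φ₁ d φ₂ : QMat n, φ₁ ∈ CliffordLevel n 2 ∧ φ₂ ∈ CliffordLevel n 2 ∧
    IsDiagonal n d ∧ U = φ₁ * d * φ₂

/-- The underlying map of the Toffoli gate `TOF_{i,j,k}`: `v ↦ v + (vᵢvⱼ)·eₖ`. -/
def tofFun (n : ℕ) (i j k : Fin n) (v : QV n) : QV n :=
  fun m => if m = k then v m + v i * v j else v m

/-- A map on `𝔽₂ⁿ` is in staircase form if it is a product (applied left-to-right)
of pairwise distinct Toffoli gates `TOF_{i,j,k}` with `i<j<k` and with targets
nondecreasing in the order the gates are applied. -/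
def IsStaircase (n : ℕ) (g : QV n → QV n) : Prop :=
  ∃ L : List (Fin n × Fin n × Fin n),
    L.Nodup ∧
    (∀ t ∈ L, t.1 < t.2.1 ∧ t.2.1 < t.2.2) ∧
    List.Chain' (fun s t => s.2.2 ≤ t.2.2) L ∧
    g = fun v => L.foldl (fun w t => tofFun n t.1 t.2.1 t.2.2 w) v

/-- A descending multiplication on `𝔽₂ⁿ`: bilinear, associative, commutative,
`eᵢeᵢ = 0`, and for `i < j`, `eᵢeⱼ ∈ span{eₖ : k > j}`. -/
def IsDescendingMul (n : ℕ) (mul : QV n → QV n → QV n) : Prop :=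
  (∀ u v w : QV n, mul (u + v) w = mul u w + mul v w) ∧
  (∀ u v w : QV n, mul u (v + w) = mul u v + mul u w) ∧
  (∀ u v w : QV n, mul (mul u v) w = mul u (mul v w)) ∧
  (∀ u v : QV n, mul u v = mul v u) ∧
  (∀ i : Fin n, mul (stdBasis n i) (stdBasis n i) = 0) ∧
  (∀ i j : Fin n, i < j → ∀ m : Fin n, m ≤ j → mul (stdBasis n i) (stdBasis n j) m = 0)

/-- The product `∏_{i ∈ l} eᵢ` under a multiplication, for a list `l` (junk `0` on `[]`). -/
def dmProdList (n : ℕ) (mul : QV n → QV n → QV n) : List (Fin n) → QV n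
  | [] => 0
  | [i] => stdBasis n i
  | i :: j :: rest => mul (stdBasis n i) (dmProdList n mul (j :: rest))

/-- The product `∏_{i ∈ T} eᵢ` under a multiplication. -/
def dmProd (n : ℕ) (mul : QV n → QV n → QV n) (T : Finset (Fin n)) : QV n :=
  dmProdList n mul (T.sort (· ≤ ·))

/-- `g` is the map `∑_{i∈S} eᵢ ↦ ∑_{∅≠T⊆S} ∏_{i∈T} eᵢ` associated to a multiplication. -/
def dmPiSpec (n : ℕ) (mul : QV n → QV n → QV n) (g : QV n → QV n) : Prop :=
  ∀ S : Finset (Fin n),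
    g (∑ i ∈ S, stdBasis n i) = ∑ T ∈ S.powerset.erase ∅, dmProd n mul T

/-- The bilinear extension of `eᵢeⱼ := g(eᵢ+eⱼ) + eᵢ + eⱼ`. -/
def inducedMul (n : ℕ) (g : QV n → QV n) (u v : QV n) : QV n :=
  ∑ i : Fin n, ∑ j : Fin n,
    (u i * v j) • (g (stdBasis n i + stdBasis n j) + stdBasis n i + stdBasis n j)

/-- Coefficient of the monomial `∏_{i∈T} aᵢ` in the unique multilinear polynomial
over `𝔽₂` representing `g : 𝔽₂ⁿ → 𝔽₂` (Möbius inversion over `𝔽₂`). -/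
def mlCoeff (n : ℕ) (g : QV n → ZMod 2) (T : Finset (Fin n)) : ZMod 2 :=
  ∑ R ∈ T.powerset, g (∑ i ∈ R, stdBasis n i)

/-- Strictly lower triangular matrix. -/
def StrictLowerTri (n : ℕ) (A : Matrix (Fin n) (Fin n) (ZMod 2)) : Prop :=
  ∀ p q : Fin n, p ≤ q → A p q = 0

/-- Multiplication of basis vectors for the gate `U_k`: the basis of `𝔽₂^(2^k-1)` is
indexed by nonempty subsets `S ⊆ [k]`, encoded as indices `a` via the binary digits of
`a+1`; `e_S e_T = e_{S∪T}` if `S ∩ T = ∅` and `e_S e_T = 0` otherwise. -/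
def ukBasisMul (k : ℕ) (a b : Fin (2 ^ k - 1)) : QV (2 ^ k - 1) :=
  if (a.val + 1) &&& (b.val + 1) = 0 then
    (if h : a.val + b.val + 1 < 2 ^ k - 1 then stdBasis (2 ^ k - 1) ⟨a.val + b.val + 1, h⟩
     else 0)
  else 0

/-- The descending multiplication defining `U_k`, extended bilinearly. -/
def ukMul (k : ℕ) (u v : QV (2 ^ k - 1)) : QV (2 ^ k - 1) :=
  ∑ a : Fin (2 ^ k - 1), ∑ b : Fin (2 ^ k - 1), (u a * v b) • ukBasisMul k a b

/-! ### Auxiliary lemmas for stmt2 -/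

lemma zmod2_add_self (a : ZMod 2) : a + a = 0 := by revert a; decide
lemma qv_add_self {n : ℕ} (v : QV n) : v + v = 0 := by
  funext m; exact zmod2_add_self (v m)
lemma zmod2_cases (a : ZMod 2) : a = 0 ∨ a = 1 := by revert a; decide

lemma foldl_fix {n : ℕ} (L : List (Fin n × Fin n × Fin n))
    (h : ∀ t ∈ L, t.1 < t.2.1 ∧ t.2.1 < t.2.2) (v : QV n)
    (hv : ∀ a b : Fin n, a ≠ b → v a * v b = 0) :
    L.foldl (fun w t => tofFun n t.1 t.2.1 t.2.2 w) v = v := by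
  induction L with
  | nil => rfl
  | cons t L ih =>
    have ht := h t (List.mem_cons_self)
    have : tofFun n t.1 t.2.1 t.2.2 v = v := by
      funext m
      simp only [tofFun]
      split
      · rw [hv t.1 t.2.1 (ne_of_lt ht.1), add_zero]
      · rfl
    simp only [List.foldl_cons, this]
    exact ih (fun s hs => h s (List.mem_cons_of_mem t hs))

lemma foldl_low {n : ℕ} (i j : Fin n)
    (L : List (Fin n × Fin n × Fin n))
    (h : ∀ t ∈ L, t.1 < t.2.1 ∧ t.2.1 < t.2.2) (w : QV n)
    (hw : ∀ m, m ≤ j → w m = (stdBasis n i + stdBasis n j) m) :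
    ∀ m, m ≤ j →
      (L.foldl (fun w t => tofFun n t.1 t.2.1 t.2.2 w) w) m
        = (stdBasis n i + stdBasis n j) m := by
  induction L generalizing w with
  | nil => exact hw
  | cons t L ih =>
    simp only [List.foldl_cons]
    have ht := h t (List.mem_cons_self)
    refine ih (fun s hs => h s (List.mem_cons_of_mem t hs)) _ ?_
    intro m hm
    simp only [tofFun]
    split
    · rename_i hmk
      have ha : t.1 < j := lt_of_lt_of_le (lt_trans ht.1 ht.2) (hmk ▸ hm)
      have hb : t.2.1 < j := lt_of_lt_of_le ht.2 (hmk ▸ hm)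
      have hwa : w t.1 = (if t.1 = i then 1 else 0) := by
        rw [hw t.1 (le_of_lt ha)]
        simp [stdBasis, Pi.add_apply, ne_of_lt ha]
      have hwb : w t.2.1 = (if t.2.1 = i then 1 else 0) := by
        rw [hw t.2.1 (le_of_lt hb)]
        simp [stdBasis, Pi.add_apply, ne_of_lt hb]
      have : w t.1 * w t.2.1 = 0 := by
        rw [hwa, hwb]
        rcases eq_or_ne t.1 i with h1 | h1
        · have : t.2.1 ≠ i := by rw [← h1]; exact (ne_of_lt ht.1).symm
          simp [this]
        · simp [h1]
      rw [this, add_zero]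
      exact hw m hm
    · exact hw m hm

lemma XZ_mem_pauli (n : ℕ) (t : QV n) : XZGate n t 0 ∈ PauliGroup n :=
  ⟨1, t, 0, Or.inl rfl, (one_smul _ _).symm⟩

lemma permGate_conj_X (n : ℕ) (f : QV n ≃ QV n) (t : QV n) :
    permGate n f * XZGate n t 0 * star (permGate n f)
      = permGate n ((f.symm.trans (Equiv.addRight t)).trans f) := by
  have h1 : permGate n f * XZGate n t 0 = Matrix.of fun a b => if a = f (b + t) then (1:ℂ) else 0 := by
    ext a b
    rw [Matrix.mul_apply]
    simp only [permGate, XZGate, Pi.zero_apply, ZMod.val_zero, zero_mul,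
      Finset.sum_const_zero, pow_zero, mul_ite, mul_one, mul_zero, ite_and, Matrix.of_apply]
    rw [Finset.sum_eq_single (b + t)]
    · simp
    · intro c _ hc; simp [hc]
    · simp
  rw [h1]
  ext a b
  rw [Matrix.mul_apply]
  simp only [Matrix.star_apply, permGate, apply_ite (star : ℂ → ℂ), star_one, star_zero, Matrix.of_apply]
  rw [Finset.sum_eq_single (f.symm b)]
  · simp [Equiv.trans_apply, Equiv.coe_addRight, eq_comm]
    congr
  · intro c _ hc
    have : b ≠ f c := fun h => hc (by simp [h])
    simp [this]
  · simp

lemma pauli_perm_translate (n : ℕ) (σ : QV n ≃ QV n)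
    (h : permGate n σ ∈ PauliGroup n) : ∃ u, ∀ v, σ v = v + u := by
  obtain ⟨c, u, z, _, hP⟩ := h
  refine ⟨u, fun v => ?_⟩
  by_contra hne
  have := congrFun (congrFun hP (σ v)) v
  simp only [permGate, if_pos rfl, Matrix.smul_apply, XZGate, if_neg hne,
    smul_zero] at this
  exact one_ne_zero this

lemma clifford2_perm_affine (n : ℕ) (σ : QV n ≃ QV n)
    (h : permGate n σ ∈ CliffordLevel n 2) :
    ∀ t, ∃ u, ∀ v, σ (v + t) = σ v + u := by
  intro t
  have h2 := h.2 (XZGate n t 0) (XZ_mem_pauli n t)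
  rw [permGate_conj_X] at h2
  obtain ⟨u, hu⟩ := pauli_perm_translate n _ h2
  refine ⟨u, fun v => ?_⟩
  have := hu (σ v)
  simpa [Equiv.trans_apply, Equiv.coe_addRight] using this

lemma clifford3_key (n : ℕ) (f : QV n ≃ QV n)
    (hf : permGate n f ∈ CliffordLevel n 3) (t s : QV n) :
    ∃ u, ∀ w, f (f.symm (w + s) + t) = f (f.symm w + t) + u := by
  have h2 := hf.2 (XZGate n t 0) (XZ_mem_pauli n t)
  rw [permGate_conj_X] at h2
  obtain ⟨u, hu⟩ := clifford2_perm_affine n _ h2 s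
  refine ⟨u, fun w => ?_⟩
  have := hu w
  simpa [Equiv.trans_apply, Equiv.coe_addRight] using this

def Xij (n : ℕ) (g : QV n → QV n) (i j : Fin n) : QV n :=
  g (stdBasis n i + stdBasis n j) + stdBasis n i + stdBasis n j

lemma inducedMul_def (n : ℕ) (g : QV n → QV n) (u v : QV n) :
    inducedMul n g u v = ∑ i : Fin n, ∑ j : Fin n, (u i * v j) • Xij n g i j := rfl

lemma Xij_symm (n : ℕ) (g : QV n → QV n) (i j : Fin n) :
    Xij n g i j = Xij n g j i := by
  unfold Xij
  rw [add_comm (stdBasis n i) (stdBasis n j), add_right_comm]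

lemma inducedMul_comm (n : ℕ) (g : QV n → QV n) (u v : QV n) :
    inducedMul n g u v = inducedMul n g v u := by
  rw [inducedMul_def, inducedMul_def, Finset.sum_comm]
  refine Finset.sum_congr rfl fun j _ => Finset.sum_congr rfl fun i _ => ?_
  rw [mul_comm, Xij_symm]

lemma inducedMul_add_left (n : ℕ) (g : QV n → QV n) (u v w : QV n) :
    inducedMul n g (u + v) w = inducedMul n g u w + inducedMul n g v w := by
  rw [inducedMul_def, inducedMul_def, inducedMul_def, ← Finset.sum_add_distrib]
  refine Finset.sum_congr rfl fun i _ => ?_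
  rw [← Finset.sum_add_distrib]
  refine Finset.sum_congr rfl fun j _ => ?_
  rw [Pi.add_apply, add_mul, add_smul]

lemma basis_mul (n : ℕ) (g : QV n → QV n) (i : Fin n) (v : QV n) :
    inducedMul n g (stdBasis n i) v = ∑ j, (v j) • Xij n g i j := by
  rw [inducedMul_def, Finset.sum_eq_single i]
  · refine Finset.sum_congr rfl fun j _ => ?_
    rw [stdBasis, if_pos rfl, one_mul]
  · intro b _ hb
    refine Finset.sum_eq_zero fun j _ => ?_
    rw [stdBasis, if_neg hb, zero_mul, zero_smul]
  · intro h; exact absurd (Finset.mem_univ i) h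

lemma expand_basis (n : ℕ) (v : QV n) : ∑ j, (v j) • stdBasis n j = v := by
  funext m
  rw [Finset.sum_apply]
  simp [stdBasis, Pi.smul_apply, smul_eq_mul, mul_ite, mul_one, mul_zero,
    Finset.sum_ite_eq]

def Gmap (n : ℕ) (f : QV n ≃ QV n) (t w : QV n) : QV n :=
  f (f.symm w + t) + w + f t

lemma Gmap_apply_f (n : ℕ) (f : QV n ≃ QV n) (t v : QV n) :
    Gmap n f t (f v) = f (v + t) + f v + f t := by
  simp [Gmap]

lemma Gmap_zero (n : ℕ) (f : QV n ≃ QV n) (h0 : f 0 = 0) (t : QV n) :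
    Gmap n f t 0 = 0 := by
  have hs0 : f.symm 0 = 0 := by rw [Equiv.symm_apply_eq, h0]
  unfold Gmap
  rw [hs0, zero_add, add_zero, qv_add_self]

lemma Gmap_add (n : ℕ) (f : QV n ≃ QV n) (h0 : f 0 = 0)
    (key : ∀ t s : QV n, ∃ u, ∀ w, f (f.symm (w + s) + t) = f (f.symm w + t) + u)
    (t w s : QV n) : Gmap n f t (w + s) = Gmap n f t w + Gmap n f t s := by
  obtain ⟨u, hu⟩ := key t s
  have hs0 : f.symm 0 = 0 := by rw [Equiv.symm_apply_eq, h0]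
  have hu0 := hu 0
  rw [zero_add, hs0, zero_add] at hu0
  unfold Gmap
  rw [hu w, hu0]
  funext m
  simp only [Pi.add_apply]
  generalize f (f.symm w + t) m = A
  generalize f t m = F
  generalize u m = U
  generalize w m = W
  generalize s m = S
  revert A F U W S; decide

lemma Gmap_comp (n : ℕ) (f : QV n ≃ QV n)
    (hadd : ∀ t x y : QV n, Gmap n f t (x + y) = Gmap n f t x + Gmap n f t y)
    (t t' w : QV n) :
    Gmap n f (t + t') w = Gmap n f t (Gmap n f t' w) + Gmap n f t w + Gmap n f t' w := by
  obtain ⟨v, rfl⟩ : ∃ v, w = f v := ⟨f.symm w, (f.apply_symm_apply w).symm⟩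
  rw [Gmap_apply_f, Gmap_apply_f, Gmap_apply_f, hadd, hadd,
    Gmap_apply_f, Gmap_apply_f, Gmap_apply_f]
  have e1 : v + t' + t = v + (t + t') := by abel
  have e2 : t' + t = t + t' := add_comm _ _
  rw [e1, e2]
  funext m
  simp only [Pi.add_apply]
  generalize f (v + (t + t')) m = A
  generalize f (v + t') m = B
  generalize f (v + t) m = C
  generalize f (t + t') m = D
  generalize f v m = E
  generalize f t m = F
  generalize f t' m = G
  revert A B C D E F G; decide

lemma Gmap_smul (n : ℕ) (f : QV n ≃ QV n) (h0 : f 0 = 0)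
    (hadd : ∀ t x y : QV n, Gmap n f t (x + y) = Gmap n f t x + Gmap n f t y)
    (t : QV n) (c : ZMod 2) (x : QV n) :
    Gmap n f t (c • x) = c • Gmap n f t x := by
  rcases zmod2_cases c with rfl | rfl
  · simp [Gmap_zero n f h0 t]
  · simp

lemma Gmap_sum (n : ℕ) (f : QV n ≃ QV n)
    (hadd : ∀ t x y : QV n, Gmap n f t (x + y) = Gmap n f t x + Gmap n f t y)
    (t : QV n) {ι : Type*} (s : Finset ι) (g : ι → QV n) :
    Gmap n f t (∑ j ∈ s, g j) = ∑ j ∈ s, Gmap n f t (g j) :=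
  map_sum (AddMonoidHom.mk' (Gmap n f t) (hadd t)) g s

lemma Gmap_basis (n : ℕ) (f : QV n ≃ QV n)
    (hei : ∀ i, f (stdBasis n i) = stdBasis n i) (i j : Fin n) :
    Gmap n f (stdBasis n i) (stdBasis n j) = Xij n ⇑f i j := by
  have h1 : Gmap n f (stdBasis n i) (stdBasis n j)
      = Gmap n f (stdBasis n i) (f (stdBasis n j)) := by rw [hei j]
  rw [h1, Gmap_apply_f, hei j, hei i]
  unfold Xij
  rw [add_comm (stdBasis n j) (stdBasis n i), add_right_comm]

lemma Gmap_comm (n : ℕ) (f : QV n ≃ QV n)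
    (hadd : ∀ t x y : QV n, Gmap n f t (x + y) = Gmap n f t x + Gmap n f t y)
    (i j x₀ : QV n) :
    Gmap n f i (Gmap n f j x₀) = Gmap n f j (Gmap n f i x₀) := by
  have h1 := Gmap_comp n f hadd i j x₀
  have h2 := Gmap_comp n f hadd j i x₀
  rw [add_comm j i] at h2
  have h3 := h1.symm.trans h2
  funext m
  have h4 := congrFun h3 m
  simp only [Pi.add_apply] at h4
  revert h4
  generalize Gmap n f i (Gmap n f j x₀) m = P
  generalize Gmap n f j (Gmap n f i x₀) m = S
  generalize Gmap n f i x₀ m = Q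
  generalize Gmap n f j x₀ m = R
  revert P S Q R; decide

lemma Gmap_expand (n : ℕ) (f : QV n ≃ QV n) (h0 : f 0 = 0)
    (hadd : ∀ t x y : QV n, Gmap n f t (x + y) = Gmap n f t x + Gmap n f t y)
    (t z : QV n) :
    Gmap n f t z = ∑ b, z b • Gmap n f t (stdBasis n b) := by
  conv_lhs => rw [← expand_basis n z]
  rw [Gmap_sum n f hadd]
  exact Finset.sum_congr rfl fun b _ => Gmap_smul n f h0 hadd t (z b) _

lemma Gmap_expand_swap (n : ℕ) (f : QV n ≃ QV n) (h0 : f 0 = 0)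
    (hadd : ∀ t x y : QV n, Gmap n f t (x + y) = Gmap n f t x + Gmap n f t y)
    (hei : ∀ i, f (stdBasis n i) = stdBasis n i)
    (c : Fin n) (z : QV n) :
    Gmap n f (stdBasis n c) z = ∑ b, z b • Gmap n f (stdBasis n b) (stdBasis n c) := by
  rw [Gmap_expand n f h0 hadd]
  refine Finset.sum_congr rfl fun b _ => ?_
  rw [Gmap_basis n f hei, Gmap_basis n f hei, Xij_symm]

lemma inducedMul_Gmap (n : ℕ) (f : QV n ≃ QV n) (h0 : f 0 = 0)
    (hadd : ∀ t x y : QV n, Gmap n f t (x + y) = Gmap n f t x + Gmap n f t y)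
    (hei : ∀ i, f (stdBasis n i) = stdBasis n i)
    (u v : QV n) :
    inducedMul n ⇑f u v = ∑ a, u a • Gmap n f (stdBasis n a) v := by
  rw [inducedMul_def]
  refine Finset.sum_congr rfl fun a _ => ?_
  rw [Gmap_expand n f h0 hadd, Finset.smul_sum]
  refine Finset.sum_congr rfl fun b _ => ?_
  rw [smul_smul, Gmap_basis n f hei]

lemma triple_swap {n : ℕ} (T : Fin n → Fin n → Fin n → QV n) (u v w : QV n) :
    ∑ c, w c • ∑ a, u a • ∑ b, v b • T a b c
      = ∑ a, u a • ∑ b, v b • ∑ c, w c • T a b c := by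
  simp only [Finset.smul_sum, smul_smul]
  rw [Finset.sum_comm]
  refine Finset.sum_congr rfl fun a _ => ?_
  rw [Finset.sum_comm]
  refine Finset.sum_congr rfl fun b _ => Finset.sum_congr rfl fun c _ => ?_
  congr 1
  ring

/-- A staircase-form permutation gate in `𝒞₃` induces, via
`eᵢeⱼ := π(eᵢ+eⱼ) + eᵢ + eⱼ` extended bilinearly, a descending multiplication. -/
theorem stmt2 (n : ℕ) (hn : 1 ≤ n) (f : QV n ≃ QV n)
    (hf : permGate n f ∈ CliffordLevel n 3) (hst : IsStaircase n ⇑f) :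
    IsDescendingMul n (inducedMul n ⇑f) := by
  obtain ⟨L, -, hLt, -, hg⟩ := hst
  have h0 : f 0 = 0 := by
    have := foldl_fix L hLt 0 (by intro a b _; simp)
    rw [hg]; exact this
  have hei : ∀ i, f (stdBasis n i) = stdBasis n i := by
    intro i
    have hv : ∀ a b : Fin n, a ≠ b → stdBasis n i a * stdBasis n i b = 0 := by
      intro a b hab
      simp only [stdBasis]
      rcases eq_or_ne a i with rfl | h
      · rw [if_neg (fun h' : b = a => hab h'.symm), mul_zero]
      · rw [if_neg h, zero_mul]
    have := foldl_fix L hLt (stdBasis n i) hv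
    rw [hg]; exact this
  have hdesc : ∀ i j : Fin n, i < j → ∀ m, m ≤ j →
      f (stdBasis n i + stdBasis n j) m = (stdBasis n i + stdBasis n j) m := by
    intro i j _ m hm
    have := foldl_low i j L hLt (stdBasis n i + stdBasis n j) (fun _ _ => rfl) m hm
    rw [hg]; exact this
  have key := clifford3_key n f hf
  have hadd : ∀ t x y : QV n, Gmap n f t (x + y) = Gmap n f t x + Gmap n f t y :=
    fun t x y => Gmap_add n f h0 key t x y
  refine ⟨inducedMul_add_left n ⇑f, ?_, ?_, inducedMul_comm n ⇑f, ?_, ?_⟩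
  · -- right additivity
    intro u v w
    rw [inducedMul_comm n ⇑f u (v + w), inducedMul_add_left,
      inducedMul_comm n ⇑f v u, inducedMul_comm n ⇑f w u]
  · -- associativity
    intro u v w
    have hL : inducedMul n ⇑f (inducedMul n ⇑f u v) w
        = ∑ c, w c • ∑ a, u a • ∑ b, v b •
            Gmap n f (stdBasis n a) (Gmap n f (stdBasis n b) (stdBasis n c)) := by
      rw [inducedMul_comm, inducedMul_Gmap n f h0 hadd hei]
      refine Finset.sum_congr rfl fun c _ => ?_
      congr 1
      rw [inducedMul_Gmap n f h0 hadd hei, Gmap_sum n f hadd]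
      refine Finset.sum_congr rfl fun a _ => ?_
      rw [Gmap_smul n f h0 hadd]
      congr 1
      rw [Gmap_comm n f hadd (stdBasis n c) (stdBasis n a) v,
        Gmap_expand_swap n f h0 hadd hei c v, Gmap_sum n f hadd]
      refine Finset.sum_congr rfl fun b _ => ?_
      rw [Gmap_smul n f h0 hadd]
    have hR : inducedMul n ⇑f u (inducedMul n ⇑f v w)
        = ∑ a, u a • ∑ b, v b • ∑ c, w c •
            Gmap n f (stdBasis n a) (Gmap n f (stdBasis n b) (stdBasis n c)) := by
      rw [inducedMul_Gmap n f h0 hadd hei]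
      refine Finset.sum_congr rfl fun a _ => ?_
      congr 1
      rw [inducedMul_Gmap n f h0 hadd hei, Gmap_sum n f hadd]
      refine Finset.sum_congr rfl fun b _ => ?_
      rw [Gmap_smul n f h0 hadd]
      congr 1
      rw [Gmap_expand n f h0 hadd (stdBasis n b) w, Gmap_sum n f hadd]
      refine Finset.sum_congr rfl fun c _ => ?_
      rw [Gmap_smul n f h0 hadd]
    rw [hL, hR]
    exact triple_swap _ u v w
  · -- eᵢeᵢ = 0
    intro i
    rw [basis_mul]
    refine Finset.sum_eq_zero fun j _ => ?_
    rcases eq_or_ne j i with rfl | hj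
    · unfold Xij
      rw [qv_add_self, h0, zero_add, qv_add_self, smul_zero]
    · rw [stdBasis, if_neg hj, zero_smul]
  · -- descending
    intro i j hij m hm
    have hb : inducedMul n ⇑f (stdBasis n i) (stdBasis n j) = Xij n ⇑f i j := by
      rw [basis_mul, Finset.sum_eq_single j]
      · rw [stdBasis, if_pos rfl, one_smul]
      · intro b _ hb
        rw [stdBasis, if_neg hb, zero_smul]
      · intro h; exact absurd (Finset.mem_univ j) h
    rw [hb]
    unfold Xij
    simp only [Pi.add_apply]
    rw [hdesc i j hij m hm]
    simp only [Pi.add_apply]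
    generalize stdBasis n i m = a
    generalize stdBasis n j m = b
    revert a b; decide
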